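/- Let p and q be distinct primes and let a, b ≥ 2 be integers. Then the girth of Γ(Z_{p^a q^b}) equals 4, where Z_{p^a q^b} is the cyclic group of order p^a q^b. -/

import Mathlib

open scoped Pointwise

/-- The co-maximal subgroup graph `Γ(G)`: vertices are the non-trivial proper
subgroups of `G`, and two distinct vertices `H`, `K` are adjacent iff `HK = G`
as a setwise product. -/
def comaximalGraph (G : Type*) [Group G] :
    SimpleGraph {H : Subgroup G // H ≠ ⊥ ∧ H ≠ ⊤} where
  Adj H K := H ≠ K ∧ ((H.1 : Set G) * (K.1 : Set G) = Set.univ)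
  symm := by
    constructor
    rintro H K ⟨hne, hmul⟩
    refine ⟨hne.symm, ?_⟩
    have h := congrArg (fun s : Set G => s⁻¹) hmul
    simpa [mul_inv_rev] using h
  loopless := by
    constructor
    rintro H ⟨hne, _⟩
    exact hne rfl

-- auxiliary lemmas

lemma aux_pow_dvd_lcm_split {p a h k : ℕ} (hp : p.Prime) (hh : h ≠ 0) (hk : k ≠ 0)
    (hd : p ^ a ∣ Nat.lcm h k) : p ^ a ∣ h ∨ p ^ a ∣ k := by
  rw [Nat.Prime.pow_dvd_iff_le_factorization hp (Nat.lcm_ne_zero hh hk),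
    Nat.factorization_lcm hh hk] at hd
  have : a ≤ h.factorization p ⊔ k.factorization p := by
    simpa using hd
  rcases le_sup_iff.mp this with h' | h'
  · exact Or.inl ((Nat.Prime.pow_dvd_iff_le_factorization hp hh).mpr h')
  · exact Or.inr ((Nat.Prime.pow_dvd_iff_le_factorization hp hk).mpr h')

section Grp
variable {G : Type*} [CommGroup G] [Finite G]

lemma aux_pow_card_mem {H : Subgroup G} {x : G} (hx : x ∈ H) : x ^ Nat.card H = 1 := by
  have h1 : (⟨x, hx⟩ : H) ^ Nat.card H = 1 := pow_card_eq_one'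
  calc x ^ Nat.card H = (((⟨x, hx⟩ : H) ^ Nat.card H : H) : G) := by rw [Subgroup.coe_pow]
  _ = 1 := by rw [h1]; rfl

lemma aux_card_dvd_lcm {H K : Subgroup G} (h : H ⊔ K = ⊤) {g : G}
    (hg : orderOf g = Nat.card G) : Nat.card G ∣ Nat.lcm (Nat.card H) (Nat.card K) := by
  have hmem : g ∈ H ⊔ K := h ▸ Subgroup.mem_top g
  obtain ⟨x, hx, y, hy, hxy⟩ := Subgroup.mem_sup.mp hmem
  have hxl : x ^ Nat.lcm (Nat.card H) (Nat.card K) = 1 := by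
    rw [← Nat.mul_div_cancel' (Nat.dvd_lcm_left (Nat.card H) (Nat.card K)), pow_mul,
      aux_pow_card_mem hx, one_pow]
  have hyl : y ^ Nat.lcm (Nat.card H) (Nat.card K) = 1 := by
    rw [← Nat.mul_div_cancel' (Nat.dvd_lcm_right (Nat.card H) (Nat.card K)), pow_mul,
      aux_pow_card_mem hy, one_pow]
  have : g ^ Nat.lcm (Nat.card H) (Nat.card K) = 1 := by
    rw [← hxy, mul_pow, hxl, hyl, one_mul]
  rw [← hg]
  exact orderOf_dvd_of_pow_eq_one this

lemma aux_mul_eq_univ {H K : Subgroup G} (h : H ⊔ K = ⊤) :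
    ((H : Set G) * (K : Set G) = Set.univ) := by
  rw [← Subgroup.mul_normal H K, h, Subgroup.coe_top]

end Grp

section ZModLemmas
variable (N : ℕ) [NeZero N]

lemma aux_card_G : Nat.card (Multiplicative (ZMod N)) = N := by
  rw [Nat.card_congr Multiplicative.toAdd, Nat.card_eq_fintype_card, ZMod.card]

lemma aux_orderOf_g : orderOf (Multiplicative.ofAdd (1 : ZMod N)) = N := by
  rw [orderOf_ofAdd_eq_addOrderOf, ZMod.addOrderOf_one]

lemma aux_zpowers_g_top : Subgroup.zpowers (Multiplicative.ofAdd (1 : ZMod N)) = ⊤ := by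
  apply Subgroup.eq_top_of_card_eq
  rw [Nat.card_zpowers, aux_orderOf_g, aux_card_G]

lemma aux_card_sub {d : ℕ} (hd : d ∣ N) :
    Nat.card (Subgroup.zpowers ((Multiplicative.ofAdd (1 : ZMod N)) ^ d)) = N / d := by
  rw [Nat.card_zpowers, orderOf_pow, aux_orderOf_g, Nat.gcd_eq_right hd]

lemma aux_join {s t : ℕ} (hst : Nat.gcd s t = 1) :
    Subgroup.zpowers ((Multiplicative.ofAdd (1 : ZMod N)) ^ s) ⊔
      Subgroup.zpowers ((Multiplicative.ofAdd (1 : ZMod N)) ^ t) = ⊤ := by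
  set g := Multiplicative.ofAdd (1 : ZMod N) with hgdef
  rw [eq_top_iff, ← aux_zpowers_g_top N, Subgroup.zpowers_le]
  have key : g = (g ^ s) ^ (Nat.gcdA s t) * (g ^ t) ^ (Nat.gcdB s t) := by
    rw [← zpow_natCast g s, ← zpow_natCast g t, ← zpow_mul, ← zpow_mul, ← zpow_add]
    rw [show ((s : ℤ) * Nat.gcdA s t + (t : ℤ) * Nat.gcdB s t) = ((Nat.gcd s t : ℤ)) from
      (Nat.gcd_eq_gcd_ab s t).symm, hst]
    simp
  have hmem : (g ^ s) ^ (Nat.gcdA s t) * (g ^ t) ^ (Nat.gcdB s t) ∈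
      Subgroup.zpowers (g ^ s) ⊔ Subgroup.zpowers (g ^ t) :=
    Subgroup.mul_mem _ (Subgroup.mem_sup_left (Subgroup.zpow_mem _ (Subgroup.mem_zpowers _) _))
      (Subgroup.mem_sup_right (Subgroup.zpow_mem _ (Subgroup.mem_zpowers _) _))
  rwa [← key] at hmem

lemma aux_no_triangle {p q a b : ℕ} (hp : p.Prime) (hq : q.Prime) (hpq : p ≠ q)
    (hN : N = p ^ a * q ^ b) {H K L : Subgroup (Multiplicative (ZMod N))}
    (hHK : H ⊔ K = ⊤) (hKL : K ⊔ L = ⊤) (hHL : H ⊔ L = ⊤) :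
    H = ⊤ ∨ K = ⊤ ∨ L = ⊤ := by
  have hg : orderOf (Multiplicative.ofAdd (1 : ZMod N)) = Nat.card (Multiplicative (ZMod N)) := by
    rw [aux_orderOf_g, aux_card_G]
  have hcard := aux_card_G N
  have hpos : ∀ M : Subgroup (Multiplicative (ZMod N)), Nat.card M ≠ 0 :=
    fun M => Nat.card_pos.ne'
  have hdvdN : ∀ M : Subgroup (Multiplicative (ZMod N)), Nat.card M ∣ N := by
    intro M
    have := Subgroup.card_subgroup_dvd_card M
    rwa [hcard] at this
  have hpa : p ^ a ∣ N := hN ▸ dvd_mul_right _ _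
  have hqb : q ^ b ∣ N := hN ▸ dvd_mul_left _ _
  have key : ∀ M M' : Subgroup (Multiplicative (ZMod N)), M ⊔ M' = ⊤ →
      (p ^ a ∣ Nat.card M ∨ p ^ a ∣ Nat.card M') ∧
      (q ^ b ∣ Nat.card M ∨ q ^ b ∣ Nat.card M') := by
    intro M M' hsup
    have h1 : N ∣ Nat.lcm (Nat.card M) (Nat.card M') := by
      have := aux_card_dvd_lcm hsup hg
      rwa [hcard] at this
    exact ⟨aux_pow_dvd_lcm_split hp (hpos M) (hpos M') (hpa.trans h1),
      aux_pow_dvd_lcm_split hq (hpos M) (hpos M') (hqb.trans h1)⟩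
  obtain ⟨p1, q1⟩ := key H K hHK
  obtain ⟨p2, q2⟩ := key K L hKL
  obtain ⟨p3, q3⟩ := key H L hHL
  have hcop : Nat.Coprime (p ^ a) (q ^ b) :=
    ((Nat.coprime_primes hp hq).mpr hpq).pow a b
  have fin : ∀ M : Subgroup (Multiplicative (ZMod N)),
      p ^ a ∣ Nat.card M → q ^ b ∣ Nat.card M → M = ⊤ := by
    intro M h1 h2
    have hNd : N ∣ Nat.card M := by
      have h3 := hcop.mul_dvd_of_dvd_of_dvd h1 h2
      rwa [← hN] at h3
    have : Nat.card M = Nat.card (Multiplicative (ZMod N)) := by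
      rw [hcard]; exact Nat.dvd_antisymm (hdvdN M) hNd
    exact Subgroup.eq_top_of_card_eq M this
  have : (p ^ a ∣ Nat.card H ∧ q ^ b ∣ Nat.card H) ∨
      (p ^ a ∣ Nat.card K ∧ q ^ b ∣ Nat.card K) ∨
      (p ^ a ∣ Nat.card L ∧ q ^ b ∣ Nat.card L) := by tauto
  rcases this with ⟨h1, h2⟩ | ⟨h1, h2⟩ | ⟨h1, h2⟩
  · exact Or.inl (fin H h1 h2)
  · exact Or.inr (Or.inl (fin K h1 h2))
  · exact Or.inr (Or.inr (fin L h1 h2))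

end ZModLemmas

set_option maxHeartbeats 2000000 in
theorem comaximal_girth_four (p q : ℕ) (hp : p.Prime) (hq : q.Prime)
    (hpq : p ≠ q) (a b : ℕ) (ha : 2 ≤ a) (hb : 2 ≤ b) :
    (comaximalGraph (Multiplicative (ZMod (p ^ a * q ^ b)))).egirth = 4 := by
  have hppos := hp.pos
  have hqpos := hq.pos
  haveI : NeZero (p ^ a * q ^ b) := ⟨(Nat.mul_pos (pow_pos hppos a) (pow_pos hqpos b)).ne'⟩
  set N := p ^ a * q ^ b with hN
  set G := Multiplicative (ZMod N) with hG
  set g := Multiplicative.ofAdd (1 : ZMod N) with hg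
  have ha0 : a ≠ 0 := by omega
  have hb0 : b ≠ 0 := by omega
  have h1p : 1 < p ^ a := Nat.one_lt_pow ha0 hp.one_lt
  have h1q : 1 < q ^ b := Nat.one_lt_pow hb0 hq.one_lt
  have hndvd_pq : ¬ p ∣ q ^ b := fun h =>
    hpq ((Nat.prime_dvd_prime_iff_eq hp hq).mp (hp.dvd_of_dvd_pow h))
  have hndvd_qp : ¬ q ∣ p ^ a := fun h =>
    (Ne.symm hpq) ((Nat.prime_dvd_prime_iff_eq hq hp).mp (hq.dvd_of_dvd_pow h))
  -- the four subgroups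
  set A := Subgroup.zpowers (g ^ (q ^ b)) with hA
  set B := Subgroup.zpowers (g ^ (p ^ a)) with hB
  set C := Subgroup.zpowers (g ^ (q ^ (b - 1))) with hC
  set D := Subgroup.zpowers (g ^ (p ^ (a - 1))) with hD
  -- cards
  have hdA : q ^ b ∣ N := dvd_mul_left _ _
  have hdB : p ^ a ∣ N := dvd_mul_right _ _
  have hdC : q ^ (b - 1) ∣ N := dvd_trans (pow_dvd_pow q (by omega)) hdA
  have hdD : p ^ (a - 1) ∣ N := dvd_trans (pow_dvd_pow p (by omega)) hdB
  have hcA : Nat.card A = p ^ a := by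
    rw [hA, aux_card_sub N hdA, hN, Nat.mul_div_cancel _ (pow_pos hqpos b)]
  have hcB : Nat.card B = q ^ b := by
    rw [hB, aux_card_sub N hdB, hN, Nat.mul_div_cancel_left _ (pow_pos hppos a)]
  have hqb1 : q ^ b = q ^ (b - 1) * q := by
    rw [← pow_succ, Nat.sub_add_cancel (by omega : 1 ≤ b)]
  have hpa1 : p ^ a = p ^ (a - 1) * p := by
    rw [← pow_succ, Nat.sub_add_cancel (by omega : 1 ≤ a)]
  have hNC : N = q ^ (b - 1) * (p ^ a * q) := by
    rw [hN, hqb1]; ring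
  have hcC : Nat.card C = p ^ a * q := by
    rw [hC, aux_card_sub N hdC, hNC, Nat.mul_div_cancel_left _ (pow_pos hqpos _)]
  have hND : N = p ^ (a - 1) * (p * q ^ b) := by
    rw [hN, hpa1]; ring
  have hcD : Nat.card D = p * q ^ b := by
    rw [hD, aux_card_sub N hdD, hND, Nat.mul_div_cancel_left _ (pow_pos hppos _)]
  -- helper facts about vertices
  have hcardG := aux_card_G N
  have ne_bot : ∀ M : Subgroup G, Nat.card M ≠ 1 → M ≠ ⊥ := by
    intro M h hM; exact h (by rw [hM, Subgroup.card_bot])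
  have ne_top : ∀ M : Subgroup G, Nat.card M ≠ N → M ≠ ⊤ := by
    intro M h hM; exact h (by rw [hM, Subgroup.card_top, hcardG])
  -- numeric non-degeneracies
  have hAne1 : (p : ℕ) ^ a ≠ 1 := by omega
  have hBne1 : (q : ℕ) ^ b ≠ 1 := by omega
  have hCne1 : p ^ a * q ≠ 1 := Nat.ne_of_gt (lt_of_lt_of_le h1p (Nat.le_mul_of_pos_right _ hqpos))
  have hDne1 : p * q ^ b ≠ 1 := Nat.ne_of_gt (lt_of_lt_of_le h1q (Nat.le_mul_of_pos_left _ hppos))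
  have hAneN : p ^ a ≠ N := by
    rw [hN]
    exact Nat.ne_of_lt ((Nat.lt_mul_iff_one_lt_right (pow_pos hppos a)).mpr h1q)
  have hBneN : q ^ b ≠ N := by
    rw [hN]
    exact Nat.ne_of_lt ((Nat.lt_mul_iff_one_lt_left (pow_pos hqpos b)).mpr h1p)
  have hCneN : p ^ a * q ≠ N := by
    rw [hN]
    have : q < q ^ b := by
      calc q = q ^ 1 := (pow_one q).symm
      _ < q ^ b := Nat.pow_lt_pow_right hq.one_lt (by omega)
    exact Nat.ne_of_lt (mul_lt_mul_of_pos_left this (pow_pos hppos a))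
  have hDneN : p * q ^ b ≠ N := by
    rw [hN]
    have : p < p ^ a := by
      calc p = p ^ 1 := (pow_one p).symm
      _ < p ^ a := Nat.pow_lt_pow_right hp.one_lt (by omega)
    exact Nat.ne_of_lt (mul_lt_mul_of_pos_right this (pow_pos hqpos b))
  -- vertices
  have vA : A ≠ ⊥ ∧ A ≠ ⊤ :=
    ⟨ne_bot A (by rw [hcA]; exact hAne1), ne_top A (by rw [hcA]; exact hAneN)⟩
  have vB : B ≠ ⊥ ∧ B ≠ ⊤ :=
    ⟨ne_bot B (by rw [hcB]; exact hBne1), ne_top B (by rw [hcB]; exact hBneN)⟩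
  have vC : C ≠ ⊥ ∧ C ≠ ⊤ :=
    ⟨ne_bot C (by rw [hcC]; exact hCne1), ne_top C (by rw [hcC]; exact hCneN)⟩
  have vD : D ≠ ⊥ ∧ D ≠ ⊤ :=
    ⟨ne_bot D (by rw [hcD]; exact hDne1), ne_top D (by rw [hcD]; exact hDneN)⟩
  -- distinctness via cards
  have card_ne : ∀ M M' : Subgroup G, Nat.card M ≠ Nat.card M' → M ≠ M' := by
    intro M M' h hMM'; exact h (by rw [hMM'])
  have numAB : p ^ a ≠ q ^ b := by
    intro h; exact hndvd_pq (h ▸ dvd_pow_self p ha0)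
  have numAC : p ^ a ≠ p ^ a * q :=
    Nat.ne_of_lt ((Nat.lt_mul_iff_one_lt_right (pow_pos hppos a)).mpr hq.one_lt)
  have numAD : p ^ a ≠ p * q ^ b := by
    intro h
    have h2 : q ∣ p * q ^ b := Dvd.dvd.mul_left (dvd_pow_self q hb0) p
    rw [← h] at h2
    exact hndvd_qp h2
  have numBC : q ^ b ≠ p ^ a * q := by
    intro h
    have h2 : p ∣ p ^ a * q := Dvd.dvd.mul_right (dvd_pow_self p ha0) q
    rw [← h] at h2
    exact hndvd_pq h2
  have numBD : q ^ b ≠ p * q ^ b :=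
    Nat.ne_of_lt ((Nat.lt_mul_iff_one_lt_left (pow_pos hqpos b)).mpr hp.one_lt)
  have numCD : p ^ a * q ≠ p * q ^ b := by
    intro h
    have h2 : p * p ∣ p ^ a * q := by
      refine Dvd.dvd.mul_right ?_ q
      calc p * p = p ^ 2 := (sq p).symm
      _ ∣ p ^ a := pow_dvd_pow p ha
    rw [h] at h2
    exact hndvd_pq ((Nat.mul_dvd_mul_iff_left hppos).mp h2)
  have hAB : A ≠ B := card_ne A B (by rw [hcA, hcB]; exact numAB)
  have hAC : A ≠ C := card_ne A C (by rw [hcA, hcC]; exact numAC)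
  have hAD : A ≠ D := card_ne A D (by rw [hcA, hcD]; exact numAD)
  have hBC : B ≠ C := card_ne B C (by rw [hcB, hcC]; exact numBC)
  have hBD : B ≠ D := card_ne B D (by rw [hcB, hcD]; exact numBD)
  have hCD : C ≠ D := card_ne C D (by rw [hcC, hcD]; exact numCD)
  -- coprimality for joins
  have cop : Nat.Coprime p q := (Nat.coprime_primes hp hq).mpr hpq
  have jAB : A ⊔ B = ⊤ := aux_join N (cop.symm.pow b a)
  have jBC : B ⊔ C = ⊤ := aux_join N (cop.pow a (b - 1))
  have jCD : C ⊔ D = ⊤ := aux_join N (cop.symm.pow (b - 1) (a - 1))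
  have jDA : D ⊔ A = ⊤ := aux_join N (cop.pow (a - 1) b)
  -- vertices of the graph
  let uA : {H : Subgroup G // H ≠ ⊥ ∧ H ≠ ⊤} := ⟨A, vA⟩
  let uB : {H : Subgroup G // H ≠ ⊥ ∧ H ≠ ⊤} := ⟨B, vB⟩
  let uC : {H : Subgroup G // H ≠ ⊥ ∧ H ≠ ⊤} := ⟨C, vC⟩
  let uD : {H : Subgroup G // H ≠ ⊥ ∧ H ≠ ⊤} := ⟨D, vD⟩
  have uAB : uA ≠ uB := fun h => hAB (congrArg Subtype.val h)
  have uAC : uA ≠ uC := fun h => hAC (congrArg Subtype.val h)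
  have uAD : uA ≠ uD := fun h => hAD (congrArg Subtype.val h)
  have uBC : uB ≠ uC := fun h => hBC (congrArg Subtype.val h)
  have uBD : uB ≠ uD := fun h => hBD (congrArg Subtype.val h)
  have uCD : uC ≠ uD := fun h => hCD (congrArg Subtype.val h)
  -- edges
  have eAB : (comaximalGraph G).Adj uA uB := ⟨uAB, aux_mul_eq_univ jAB⟩
  have eBC : (comaximalGraph G).Adj uB uC := ⟨uBC, aux_mul_eq_univ jBC⟩
  have eCD : (comaximalGraph G).Adj uC uD := ⟨uCD, aux_mul_eq_univ jCD⟩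
  have eDA : (comaximalGraph G).Adj uD uA := ⟨fun h => hAD (congrArg Subtype.val h).symm,
    aux_mul_eq_univ jDA⟩
  -- the 4-cycle
  let w : (comaximalGraph G).Walk uA uA :=
    .cons eAB (.cons eBC (.cons eCD (.cons eDA .nil)))
  have hwlen : w.length = 4 := rfl
  have hwcyc : w.IsCycle := by
    constructor
    · constructor
      · rw [SimpleGraph.Walk.isTrail_def]
        simp only [w, SimpleGraph.Walk.edges_cons, SimpleGraph.Walk.edges_nil]
        simp [List.nodup_cons, Sym2.eq_iff, uAB, uAC, uAD, uBC, uBD, uCD]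
        tauto
      · simp [w]
    · simp only [w, SimpleGraph.Walk.support_cons, SimpleGraph.Walk.support_nil]
      simp [List.nodup_cons]
      tauto
  -- adjacency implies sup = top
  have adj_sup : ∀ u v : {H : Subgroup G // H ≠ ⊥ ∧ H ≠ ⊤},
      (comaximalGraph G).Adj u v → u.1 ⊔ v.1 = ⊤ := by
    intro u v huv
    have h2 := huv.2
    rw [← Subgroup.mul_normal u.1 v.1] at h2
    exact Subgroup.coe_eq_univ.mp h2
  -- conclude
  refine le_antisymm ?_ ?_
  · have hle : (comaximalGraph G).egirth ≤ (w.length : ℕ∞) :=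
      iInf_le_of_le uA (iInf_le_of_le w (iInf_le _ hwcyc))
    rw [hwlen] at hle
    exact_mod_cast hle
  · rw [SimpleGraph.le_egirth]
    intro u w' hw'
    have h3 := hw'.three_le_length
    rw [show (4 : ℕ∞) = ((4 : ℕ) : ℕ∞) from rfl, Nat.cast_le]
    by_contra hlt
    have hlen3 : w'.length = 3 := by omega
    clear h3 hlt
    cases w' with
    | nil => simp at hlen3
    | @cons _ x _ h1 w1 =>
      cases w1 with
      | nil => simp at hlen3
      | @cons _ y _ h2 w2 =>
        cases w2 with
        | nil => simp at hlen3
        | cons h3' w3 =>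
          cases w3 with
          | cons h4 w4 => simp [SimpleGraph.Walk.length_cons] at hlen3
          | nil =>
            have s1 := adj_sup _ _ h1
            have s2 := adj_sup _ _ h2
            have s3 := adj_sup _ _ h3'
            have htri := aux_no_triangle N hp hq hpq hN s1 s2
              (by rw [sup_comm]; exact s3)
            rcases htri with h | h | h
            · exact u.2.2 h
            · exact x.2.2 h
            · exact y.2.2 h
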